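/- Let {xₙ} be a sequence in a real Hilbert space and F a nonempty closed convex set with ‖xₙ − x₀‖ ≤ ‖u − x₀‖ for all u ∈ F and all n. If every weak cluster point of {xₙ} lies in F, then {xₙ} converges strongly to x† = P_F(x₀). -/

import Mathlib

open Filter Topology

/-- Weak sequential compactness of bounded sequences in a real Hilbert space. -/
lemma exists_weak_cluster {H : Type*} [NormedAddCommGroup H] [InnerProductSpace ℝ H]
    [CompleteSpace H] (y : ℕ → H) (R : ℝ) (hy : ∀ n, ‖y n‖ ≤ R) :
    ∃ z : H, ∃ φ : ℕ → ℕ, StrictMono φ ∧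
      ∀ w : H, Tendsto (fun n => (inner ℝ (y (φ n)) w : ℝ)) atTop (𝓝 (inner ℝ z w)) := by
  have hR : 0 ≤ R := le_trans (norm_nonneg _) (hy 0)
  set K := (Submodule.span ℝ (Set.range y)).topologicalClosure with hK
  haveI : CompleteSpace K := (Submodule.isClosed_topologicalClosure _).completeSpace_coe
  have hyK : ∀ n, y n ∈ K := fun n =>
    Submodule.le_topologicalClosure _ (Submodule.subset_span ⟨n, rfl⟩)
  have hsep : TopologicalSpace.IsSeparable (K : Set H) := by
    rw [Submodule.topologicalClosure_coe]
    exact ((Set.countable_range y).isSeparable.span).closure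
  haveI : TopologicalSpace.SeparableSpace K := hsep.separableSpace
  haveI : Nonempty K := ⟨0⟩
  obtain ⟨e, he⟩ := TopologicalSpace.exists_dense_seq K
  set g : ℕ → ℕ → ℝ := fun n k => inner ℝ (y n) ((e k : H)) with hg
  have hgmem : ∀ n, g n ∈ Set.pi Set.univ
      (fun k => Set.Icc (-(R * ‖(e k : H)‖)) (R * ‖(e k : H)‖)) := by
    intro n k _
    have h1 : |(inner ℝ (y n) ((e k : H)) : ℝ)| ≤ ‖y n‖ * ‖(e k : H)‖ :=
      abs_real_inner_le_norm _ _
    have h2 : ‖y n‖ * ‖(e k : H)‖ ≤ R * ‖(e k : H)‖ :=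
      mul_le_mul_of_nonneg_right (hy n) (norm_nonneg _)
    have := h1.trans h2
    exact abs_le.1 this
  obtain ⟨c, -, φ, hφ, hgc⟩ :=
    (isCompact_univ_pi (fun k => isCompact_Icc)).tendsto_subseq hgmem
  have hcoord : ∀ k, Tendsto (fun n => g (φ n) k) atTop (𝓝 (c k)) := fun k =>
    tendsto_pi_nhds.1 hgc k
  -- Every inner product sequence along φ is Cauchy.
  have key : ∀ w : H, CauchySeq (fun n => (inner ℝ (y (φ n)) w : ℝ)) := by
    intro w
    set p : K := K.orthogonalProjectionOnto w with hp
    have hiw : ∀ n, (inner ℝ (y (φ n)) w : ℝ) = inner ℝ (y (φ n)) ((p : H)) := by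
      intro n
      have h1 : w - (p : H) ∈ Kᗮ := K.sub_starProjection_mem_orthogonal w
      have h2 : (inner ℝ (y (φ n)) (w - (p : H)) : ℝ) =
          0 := Submodule.inner_right_of_mem_orthogonal (hyK (φ n)) h1
      rw [inner_sub_right] at h2
      linarith
    have hiw' : (fun n => (inner ℝ (y (φ n)) w : ℝ))
        = fun n => (inner ℝ (y (φ n)) ((p : H)) : ℝ) := funext hiw
    rw [hiw', Metric.cauchySeq_iff]
    intro ε hε
    set δ := ε / (4 * (R + 1)) with hδdef
    have hδ : 0 < δ := by positivity
    obtain ⟨k, hk⟩ : ∃ k, dist p (e k) < δ := Metric.denseRange_iff.1 he p δ hδ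
    have hk' : ‖(p : H) - (e k : H)‖ < δ := by
      rw [Subtype.dist_eq, dist_eq_norm] at hk; exact hk
    have hck : CauchySeq (fun n => g (φ n) k) := (hcoord k).cauchySeq
    obtain ⟨N, hN⟩ := Metric.cauchySeq_iff.1 hck (ε / 2) (half_pos hε)
    refine ⟨N, fun m hm n hn => ?_⟩
    have hNmn := hN m hm n hn
    rw [Real.dist_eq] at hNmn ⊢
    have hsplit : ∀ j, (inner ℝ (y j) ((p : H)) : ℝ)
        = inner ℝ (y j) ((e k : H)) + inner ℝ (y j) ((p : H) - (e k : H)) := by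
      intro j; rw [inner_sub_right]; ring
    have hb : ∀ j, |(inner ℝ (y j) ((p : H) - (e k : H)) : ℝ)| ≤ R * δ := by
      intro j
      refine (abs_real_inner_le_norm _ _).trans ?_
      exact mul_le_mul (hy j) hk'.le (norm_nonneg _) hR
    have hRδ : R * δ ≤ ε / 4 := by
      have hpos : (0:ℝ) < 4 * (R + 1) := by positivity
      rw [hδdef, mul_div_assoc', div_le_div_iff₀ hpos (by norm_num : (0:ℝ) < 4)]
      nlinarith [hε.le, hR]
    calc |(inner ℝ (y (φ m)) ((p:H)) : ℝ) - inner ℝ (y (φ n)) ((p:H))|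
        = |(g (φ m) k - g (φ n) k) + ((inner ℝ (y (φ m)) ((p:H) - (e k : H)) : ℝ)
            - inner ℝ (y (φ n)) ((p:H) - (e k : H)))| := by
          rw [hsplit (φ m), hsplit (φ n)]; simp only [hg]; ring_nf
      _ ≤ |g (φ m) k - g (φ n) k| + |(inner ℝ (y (φ m)) ((p:H) - (e k : H)) : ℝ)
            - inner ℝ (y (φ n)) ((p:H) - (e k : H))| := abs_add_le _ _
      _ ≤ |g (φ m) k - g (φ n) k|
            + (|(inner ℝ (y (φ m)) ((p:H) - (e k : H)) : ℝ)|
              + |(inner ℝ (y (φ n)) ((p:H) - (e k : H)) : ℝ)|) := by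
          gcongr; exact abs_sub _ _
      _ < ε / 2 + (R * δ + R * δ) :=
          add_lt_add_of_lt_of_le hNmn (add_le_add (hb (φ m)) (hb (φ n)))
      _ ≤ ε / 2 + (ε / 4 + ε / 4) := by gcongr
      _ = ε := by ring
  choose L hL using fun w => cauchySeq_tendsto_of_complete (key w)
  have Ladd : ∀ a b : H, L (a + b) = L a + L b := by
    intro a b
    refine tendsto_nhds_unique ?_ ((hL a).add (hL b))
    have : (fun n => (inner ℝ (y (φ n)) (a + b) : ℝ))
        = fun n => (inner ℝ (y (φ n)) a : ℝ) + inner ℝ (y (φ n)) b := by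
      funext n; rw [inner_add_right]
    rw [← this]; exact hL (a + b)
  have Lsmul : ∀ (r : ℝ) (a : H), L (r • a) = r * L a := by
    intro r a
    refine tendsto_nhds_unique ?_ ((hL a).const_mul r)
    have : (fun n => (inner ℝ (y (φ n)) (r • a) : ℝ))
        = fun n => r * (inner ℝ (y (φ n)) a : ℝ) := by
      funext n; rw [real_inner_smul_right]
    rw [← this]; exact hL (r • a)
  have Lbound : ∀ w : H, ‖L w‖ ≤ R * ‖w‖ := by
    intro w
    have h1 : Tendsto (fun n => |(inner ℝ (y (φ n)) w : ℝ)|) atTop (𝓝 |L w|) := (hL w).abs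
    rw [Real.norm_eq_abs]
    refine le_of_tendsto h1 (Eventually.of_forall fun n => ?_)
    exact (abs_real_inner_le_norm _ _).trans
      (mul_le_mul_of_nonneg_right (hy (φ n)) (norm_nonneg _))
  let Llin : H →ₗ[ℝ] ℝ :=
    { toFun := L, map_add' := Ladd, map_smul' := Lsmul }
  let Lcont : H →L[ℝ] ℝ := Llin.mkContinuous R fun w => Lbound w
  refine ⟨(InnerProductSpace.toDual ℝ H).symm Lcont, φ, hφ, fun w => ?_⟩
  have : (inner ℝ ((InnerProductSpace.toDual ℝ H).symm Lcont) w : ℝ) = Lcont w :=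
    InnerProductSpace.toDual_symm_apply
  rw [this]
  exact hL w

/-- Let `{xₙ}` be a sequence in a real Hilbert space and `F` a nonempty closed convex
set with `‖xₙ - x₀‖ ≤ ‖u - x₀‖` for all `u ∈ F` and all `n`. If every weak cluster
point of `{xₙ}` lies in `F`, then `{xₙ}` converges strongly to `x† = P_F x₀`. -/
theorem strong_convergence_to_projection
    {H : Type*} [NormedAddCommGroup H] [InnerProductSpace ℝ H] [CompleteSpace H]
    (F : Set H) (hF : F.Nonempty) (hFclosed : IsClosed F) (hFconv : Convex ℝ F)
    (x₀ : H) (x : ℕ → H)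
    (hbound : ∀ u ∈ F, ∀ n, ‖x n - x₀‖ ≤ ‖u - x₀‖)
    (hcluster : ∀ z : H, (∃ φ : ℕ → ℕ, StrictMono φ ∧
      ∀ w : H, Filter.Tendsto (fun n => (inner ℝ (x (φ n)) w : ℝ)) Filter.atTop
        (nhds (inner ℝ z w))) → z ∈ F)
    (xdag : H) (hxdagF : xdag ∈ F)
    (hxdag : ∀ u ∈ F, ‖xdag - x₀‖ ≤ ‖u - x₀‖) :
    Filter.Tendsto x Filter.atTop (nhds xdag) := by
  set d := ‖xdag - x₀‖ with hd
  have hled : ∀ n, ‖x n - x₀‖ ≤ d := fun n => hbound xdag hxdagF n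
  by_contra hcon
  rw [Metric.tendsto_atTop] at hcon
  push_neg at hcon
  obtain ⟨ε, hε, hfreq⟩ := hcon
  have hfreq' : ∃ᶠ n in Filter.atTop, ε ≤ dist (x n) xdag := by
    rw [Filter.frequently_atTop]
    intro N; obtain ⟨n, hn1, hn2⟩ := hfreq N; exact ⟨n, hn1, hn2⟩
  obtain ⟨ψ, hψ, hψε⟩ := Filter.extraction_of_frequently_atTop hfreq'
  -- boundedness of the subsequence
  set R := d + ‖x₀‖ with hR
  have hbdd : ∀ n, ‖x (ψ n)‖ ≤ R := by
    intro n
    calc ‖x (ψ n)‖ = ‖(x (ψ n) - x₀) + x₀‖ := by rw [sub_add_cancel]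
      _ ≤ ‖x (ψ n) - x₀‖ + ‖x₀‖ := norm_add_le _ _
      _ ≤ d + ‖x₀‖ := add_le_add_left (hled _) _
  obtain ⟨z, φ, hφ, hweak⟩ := exists_weak_cluster (fun n => x (ψ n)) R hbdd
  have hzF : z ∈ F := hcluster z ⟨ψ ∘ φ, hψ.comp hφ, fun w => hweak w⟩
  -- weak convergence of differences
  have hweak' : ∀ w : H, Filter.Tendsto
      (fun n => (inner ℝ (x (ψ (φ n)) - x₀) w : ℝ)) Filter.atTop (nhds (inner ℝ (z - x₀) w)) := by
    intro w
    have h1 : (fun n => (inner ℝ (x (ψ (φ n)) - x₀) w : ℝ))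
        = fun n => (inner ℝ (x (ψ (φ n))) w : ℝ) - inner ℝ x₀ w := by
      funext n; rw [inner_sub_left]
    rw [h1, inner_sub_left]
    exact (hweak w).sub_const _
  -- ‖z - x₀‖ ≤ d
  have hzle : ‖z - x₀‖ ≤ d := by
    rcases le_or_gt ‖z - x₀‖ 0 with h | h
    · exact h.trans (norm_nonneg _)
    · have h1 : (inner ℝ (z - x₀) (z - x₀) : ℝ) ≤ d * ‖z - x₀‖ := by
        refine le_of_tendsto (hweak' (z - x₀)) (Filter.Eventually.of_forall fun n => ?_)
        calc (inner ℝ (x (ψ (φ n)) - x₀) (z - x₀) : ℝ)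
            ≤ ‖x (ψ (φ n)) - x₀‖ * ‖z - x₀‖ := real_inner_le_norm _ _
          _ ≤ d * ‖z - x₀‖ := mul_le_mul_of_nonneg_right (hled _) (norm_nonneg _)
      rw [real_inner_self_eq_norm_mul_norm] at h1
      exact le_of_mul_le_mul_right h1 h
  have hzge : d ≤ ‖z - x₀‖ := hxdag z hzF
  have hzeq : ‖z - x₀‖ = d := le_antisymm hzle hzge
  -- z = xdag by uniqueness of the minimizer (parallelogram law)
  have hzx : z = xdag := by
    have hmF : (1/2 : ℝ) • z + (1/2 : ℝ) • xdag ∈ F :=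
      hFconv hzF hxdagF (by norm_num) (by norm_num) (by norm_num)
    have hmd : d ≤ ‖((1/2 : ℝ) • z + (1/2 : ℝ) • xdag) - x₀‖ := hxdag _ hmF
    have hpar := parallelogram_law_with_norm ℝ (z - x₀) (xdag - x₀)
    have hsum : (z - x₀) + (xdag - x₀) = (2 : ℝ) • (((1/2 : ℝ) • z + (1/2 : ℝ) • xdag) - x₀) := by
      rw [smul_sub, smul_add, smul_smul, smul_smul]; norm_num
      module
    have hns : ‖(z - x₀) + (xdag - x₀)‖ = 2 * ‖((1/2 : ℝ) • z + (1/2 : ℝ) • xdag) - x₀‖ := by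
      rw [hsum, norm_smul]; norm_num
    have hdiff : (z - x₀) - (xdag - x₀) = z - xdag := by abel
    rw [hdiff, hns, hzeq] at hpar
    have h2d : 2 * d ≤ 2 * ‖((1/2 : ℝ) • z + (1/2 : ℝ) • xdag) - x₀‖ := by linarith
    have hsq : ‖z - xdag‖ ^ 2 ≤ 0 := by nlinarith [norm_nonneg (z - xdag), hd ▸ norm_nonneg (xdag - x₀)]
    have : ‖z - xdag‖ = 0 := by nlinarith [norm_nonneg (z - xdag)]
    rw [← sub_eq_zero]; exact norm_eq_zero.1 this
  -- strong convergence of the sub-subsequence, contradiction with ε ≤ dist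
  have hip : Filter.Tendsto (fun n => (inner ℝ (x (ψ (φ n)) - x₀) (xdag - x₀) : ℝ))
      Filter.atTop (nhds (d ^ 2)) := by
    have := hweak' (xdag - x₀)
    rw [hzx] at this
    rwa [real_inner_self_eq_norm_mul_norm, ← hd, ← sq] at this
  have hub : Filter.Tendsto (fun n => 2 * d ^ 2 - 2 * (inner ℝ (x (ψ (φ n)) - x₀) (xdag - x₀) : ℝ))
      Filter.atTop (nhds 0) := by
    have := (hip.const_mul 2).const_sub (2 * d ^ 2)
    simpa using this
  have hsqle : ∀ n, ‖x (ψ (φ n)) - xdag‖ ^ 2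
      ≤ 2 * d ^ 2 - 2 * (inner ℝ (x (ψ (φ n)) - x₀) (xdag - x₀) : ℝ) := by
    intro n
    have hdec : x (ψ (φ n)) - xdag = (x (ψ (φ n)) - x₀) - (xdag - x₀) := by abel
    rw [hdec, ← real_inner_self_eq_norm_sq, inner_sub_sub_self]
    rw [real_inner_self_eq_norm_sq, real_inner_self_eq_norm_sq, real_inner_comm (xdag - x₀)]
    have h1 : ‖x (ψ (φ n)) - x₀‖ ^ 2 ≤ d ^ 2 := by
      have := hled (ψ (φ n)); nlinarith [norm_nonneg (x (ψ (φ n)) - x₀)]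
    rw [← hd]
    nlinarith
  have hev : ∀ᶠ n in Filter.atTop,
      2 * d ^ 2 - 2 * (inner ℝ (x (ψ (φ n)) - x₀) (xdag - x₀) : ℝ) < ε ^ 2 :=
    hub.eventually (Filter.Tendsto.eventually_lt_const (by positivity) Filter.tendsto_id)
  obtain ⟨n, hn⟩ := hev.exists
  have h1 : ε ≤ ‖x (ψ (φ n)) - xdag‖ := by rw [← dist_eq_norm]; exact hψε (φ n)
  have h2 : ε ^ 2 ≤ ‖x (ψ (φ n)) - xdag‖ ^ 2 := by nlinarith
  linarith [hsqle n]
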